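/- arXiv:1806.00596 — 4 statements merged into one kernel-verified Lean document; each statement's English description precedes it below -/
import Mathlib

section
/- Let p be prime and suppose w = (w_1,...,w_n) ∈ (ℤ/pℤ)^n has no coordinate value occurring with multiplicity greater than n-m. Let X = (x_1,...,x_n) be a random vector of Laplacian type T_i: the coordinates x_j for j ≠ i are i.i.d. copies of a random variable ξ with max_{r∈ℤ/pℤ} P(ξ=r) ≤ 1-α, and x_i = -Σ_{j≠i} x_j. Then for every r ∈ ℤ/pℤ, |P(X·w = r) - 1/p| ≤ 2/√(αm), provided α ≥ 4/m. -/
open MeasureTheory ProbabilityTheory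

set_option linter.unusedSectionVars false
set_option linter.unusedTactic false
set_option linter.unusedVariables false
set_option maxHeartbeats 1000000

section Helpers
open Complex Finset Real MeasureTheory
variable {p : ℕ} [NeZero p]
lemma norm_stdAddChar (x : ZMod p) : ‖ZMod.stdAddChar x‖ = 1 := by
  rw [ZMod.stdAddChar_apply]
  exact Circle.norm_coe _

lemma conj_stdAddChar (x : ZMod p) :
    (starRingEnd ℂ) (ZMod.stdAddChar x) = ZMod.stdAddChar (-x) := by
  rw [ZMod.stdAddChar_apply, ZMod.stdAddChar_apply, ← Circle.coe_inv_eq_conj,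
    AddChar.map_neg_eq_inv]

lemma re_stdAddChar (x : ZMod p) :
    (ZMod.stdAddChar x).re = Real.cos (2 * Real.pi * x.val / p) := by
  rw [ZMod.stdAddChar_apply, ZMod.toCircle_apply]
  have : 2 * Real.pi * Complex.I * (x.val : ℂ) / p
      = ((2 * Real.pi * x.val / p : ℝ) : ℂ) * Complex.I := by push_cast; ring
  rw [this, Complex.exp_ofReal_mul_I_re]

lemma zmod_orth (x : ZMod p) :
    ∑ t : ZMod p, ZMod.stdAddChar (t * x) = if x = 0 then (p : ℂ) else 0 := by
  split_ifs with h
  · simp [h]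
  · have hx : (ZMod.stdAddChar (N := p)).mulShift x ≠ 1 := ZMod.isPrimitive_stdAddChar p h
    simpa [AddChar.mulShift_apply, mul_comm] using AddChar.sum_eq_zero_of_ne_one hx

lemma addChar_sum {ι : Type*} (s : Finset ι) (ψ : AddChar (ZMod p) ℂ) (f : ι → ZMod p) :
    ψ (∑ j ∈ s, f j) = ∏ j ∈ s, ψ (f j) := by
  classical
  induction s using Finset.cons_induction with
  | empty => simp
  | cons a s ha ih => rw [Finset.sum_cons, Finset.prod_cons, AddChar.map_add_eq_mul, ih]

noncomputable def phi (q : ZMod p → ℝ) (s : ZMod p) : ℂ :=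
  ∑ c : ZMod p, (q c : ℂ) * ZMod.stdAddChar (s * c)

lemma fourier_identity {ι : Type*} [Fintype ι] [DecidableEq ι]
    (q : ZMod p → ℝ) (u : ι → ZMod p) (r : ZMod p) :
    ((∑ v : ι → ZMod p, (∏ j, q (v j)) * (if ∑ j, v j * u j = r then 1 else 0) : ℝ) : ℂ)
      = (p : ℂ)⁻¹ * ∑ t : ZMod p, ZMod.stdAddChar (-(t * r)) * ∏ j, phi q (t * u j) := by
  have hp : (p : ℂ) ≠ 0 := Nat.cast_ne_zero.2 (NeZero.ne p)
  have key : ∀ t : ZMod p, ∏ j, phi q (t * u j)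
      = ∑ v : ι → ZMod p, (∏ j, (q (v j) : ℂ)) * ZMod.stdAddChar (t * ∑ j, v j * u j) := by
    intro t
    simp only [phi]
    rw [Finset.prod_univ_sum]
    rw [Fintype.piFinset_univ]
    refine Finset.sum_congr rfl fun v _ => ?_
    rw [Finset.prod_mul_distrib, Finset.mul_sum]
    congr 1
    rw [← addChar_sum]
    congr 1
    exact Finset.sum_congr rfl fun j _ => by ring
  have main : (p : ℂ)⁻¹ * ∑ t : ZMod p, ZMod.stdAddChar (-(t * r)) * ∏ j, phi q (t * u j)
      = ∑ v : ι → ZMod p, (∏ j, (q (v j) : ℂ)) * (if ∑ j, v j * u j = r then 1 else 0) := by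
    calc (p : ℂ)⁻¹ * ∑ t : ZMod p, ZMod.stdAddChar (-(t * r)) * ∏ j, phi q (t * u j)
        = (p:ℂ)⁻¹ * ∑ t : ZMod p, ∑ v : ι → ZMod p,
            (∏ j, (q (v j) : ℂ)) * ZMod.stdAddChar (t * (∑ j, v j * u j - r)) := by
          congr 1
          refine Finset.sum_congr rfl fun t _ => ?_
          rw [key t, Finset.mul_sum]
          refine Finset.sum_congr rfl fun v _ => ?_
          rw [mul_sub, sub_eq_add_neg, AddChar.map_add_eq_mul]
          ring
      _ = (p:ℂ)⁻¹ * ∑ v : ι → ZMod p, (∏ j, (q (v j) : ℂ)) *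
            (if (∑ j, v j * u j - r) = 0 then (p:ℂ) else 0) := by
          rw [Finset.sum_comm]
          congr 1; refine Finset.sum_congr rfl fun v _ => ?_
          rw [← Finset.mul_sum, zmod_orth]
      _ = ∑ v : ι → ZMod p, (∏ j, (q (v j) : ℂ)) * (if ∑ j, v j * u j = r then 1 else 0) := by
          rw [Finset.mul_sum]
          refine Finset.sum_congr rfl fun v _ => ?_
          simp only [sub_eq_zero]
          split_ifs with h <;> simp [h, hp]
          · field_simp
  rw [main]
  push_cast
  refine Finset.sum_congr rfl fun v _ => ?_
  split_ifs <;> push_cast <;> ring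

lemma norm_phi_le_one {q : ZMod p → ℝ} (hq0 : ∀ c, 0 ≤ q c) (hq1 : ∑ c, q c = 1)
    (s : ZMod p) : ‖phi q s‖ ≤ 1 := by
  calc ‖phi q s‖ ≤ ∑ c : ZMod p, ‖(q c : ℂ) * ZMod.stdAddChar (s * c)‖ := norm_sum_le _ _
    _ = ∑ c : ZMod p, q c := by
        refine Finset.sum_congr rfl fun c _ => ?_
        rw [norm_mul, norm_stdAddChar, mul_one, Complex.norm_real,
          Real.norm_of_nonneg (hq0 c)]
    _ = 1 := hq1

lemma phi_zero {q : ZMod p → ℝ} (hq1 : ∑ c, q c = 1) : phi q 0 = 1 := by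
  simp only [phi, zero_mul, AddChar.map_zero_eq_one, mul_one]
  rw [← Complex.ofReal_sum, hq1, Complex.ofReal_one]

lemma amgm {ι : Type*} {T : Finset ι} {m : ℕ} (hm : 0 < m) (hT : T.card = m)
    (a : ι → ℝ) (h0 : ∀ j, 0 ≤ a j) :
    ∏ j ∈ T, a j ≤ (m : ℝ)⁻¹ * ∑ j ∈ T, a j ^ m := by
  have hm' : (m : ℝ) ≠ 0 := Nat.cast_ne_zero.2 hm.ne'
  have := Real.geom_mean_le_arith_mean_weighted T (fun _ => (m : ℝ)⁻¹) (fun j => a j ^ m)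
    (fun i _ => by positivity)
    (by
      rw [Finset.sum_const, hT, nsmul_eq_mul, mul_inv_cancel₀ hm'])
    (fun i _ => pow_nonneg (h0 i) m)
  calc ∏ j ∈ T, a j = ∏ j ∈ T, (a j ^ m) ^ ((m : ℝ)⁻¹) := by
        refine Finset.prod_congr rfl fun j _ => ?_
        rw [← Real.rpow_natCast (a j) m, ← Real.rpow_mul (h0 j), mul_inv_cancel₀ hm',
          Real.rpow_one]
    _ ≤ ∑ j ∈ T, (m : ℝ)⁻¹ * a j ^ m := this
    _ = (m : ℝ)⁻¹ * ∑ j ∈ T, a j ^ m := by rw [Finset.mul_sum]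

lemma prod_le_subset {ι : Type*} [Fintype ι] [DecidableEq ι] {T : Finset ι} (a : ι → ℝ)
    (h0 : ∀ j, 0 ≤ a j) (h1 : ∀ j, a j ≤ 1) :
    ∏ j, a j ≤ ∏ j ∈ T, a j := by
  rw [← Finset.prod_sdiff (Finset.subset_univ T)]
  exact mul_le_of_le_one_left (Finset.prod_nonneg fun j _ => h0 j)
    (Finset.prod_le_one (fun j _ => h0 j) (fun j _ => h1 j))

lemma reindex_sum {P : ℕ} [Fact P.Prime] (g : ZMod P → ℝ) {d : ZMod P} (hd : d ≠ 0) :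
    ∑ t ∈ ({(0 : ZMod P)}ᶜ : Finset (ZMod P)), g (t * d)
      = ∑ s ∈ ({(0 : ZMod P)}ᶜ : Finset (ZMod P)), g s := by
  refine Finset.sum_nbij' (fun t => t * d) (fun s => s * d⁻¹) ?_ ?_ ?_ ?_ ?_
  · intro t ht
    simp only [Finset.mem_compl, Finset.mem_singleton] at *
    exact mul_ne_zero ht hd
  · intro s hs
    simp only [Finset.mem_compl, Finset.mem_singleton] at *
    exact mul_ne_zero hs (inv_ne_zero hd)
  · intro t _; field_simp
  · intro s _; field_simp
  · intro t _; rfl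

noncomputable def Fgap {p : ℕ} [NeZero p] (x : ZMod p) : ℝ := 1 - (ZMod.stdAddChar x).re

lemma Fgap_zero : Fgap (0 : ZMod p) = 0 := by simp [Fgap]

lemma Fgap_nonneg (x : ZMod p) : 0 ≤ Fgap x := by
  have : (ZMod.stdAddChar x).re ≤ 1 := by
    calc (ZMod.stdAddChar x).re ≤ ‖ZMod.stdAddChar x‖ := Complex.re_le_norm _
      _ = 1 := norm_stdAddChar x
  simp [Fgap]; linarith

lemma conj_phi (q : ZMod p → ℝ) (s : ZMod p) :
    (starRingEnd ℂ) (phi q s) = ∑ c : ZMod p, (q c : ℂ) * ZMod.stdAddChar (-(s * c)) := by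
  rw [phi, map_sum]
  refine Finset.sum_congr rfl fun c _ => ?_
  rw [map_mul, Complex.conj_ofReal, conj_stdAddChar]

lemma norm_phi_sq (q : ZMod p → ℝ) (s : ZMod p) :
    ‖phi q s‖ ^ 2 = ∑ c : ZMod p, ∑ c' : ZMod p,
      q c * q c' * (ZMod.stdAddChar (s * (c - c'))).re := by
  have h1 : (‖phi q s‖ : ℝ) ^ 2 = (phi q s * (starRingEnd ℂ) (phi q s)).re := by
    rw [Complex.mul_conj]
    simp [Complex.normSq_eq_norm_sq, ← Complex.ofReal_pow]
  rw [h1, conj_phi, phi, Finset.sum_mul_sum, Complex.re_sum]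
  refine Finset.sum_congr rfl fun c _ => ?_
  rw [Complex.re_sum]
  refine Finset.sum_congr rfl fun c' _ => ?_
  have : (q c : ℂ) * ZMod.stdAddChar (s * c) * ((q c' : ℂ) * ZMod.stdAddChar (-(s * c')))
      = ((q c * q c' : ℝ) : ℂ) * ZMod.stdAddChar (s * (c - c')) := by
    rw [mul_sub, sub_eq_add_neg, AddChar.map_add_eq_mul]
    push_cast; ring
  rw [this, Complex.re_ofReal_mul]

lemma norm_phi_pow_le {q : ZMod p → ℝ} (hq0 : ∀ c, 0 ≤ q c) (hq1 : ∑ c, q c = 1)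
    {α : ℝ} (hα : 0 < α) (hbal : ∀ c, q c ≤ 1 - α) (m : ℕ) :
    ∃ ν : ZMod p × ZMod p → ℝ,
      (∀ cc, 0 ≤ ν cc) ∧
      (∑ cc ∈ (Finset.univ ×ˢ Finset.univ).filter
          (fun cc : ZMod p × ZMod p => cc.1 ≠ cc.2), ν cc = 1) ∧
      ∀ s : ZMod p, ‖phi q s‖ ^ m ≤
        ∑ cc ∈ (Finset.univ ×ˢ Finset.univ).filter
          (fun cc : ZMod p × ZMod p => cc.1 ≠ cc.2),
          ν cc * Real.exp (-(m * α / 2) * Fgap (s * (cc.1 - cc.2))) := by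
  classical
  set D := (Finset.univ ×ˢ Finset.univ).filter
      (fun cc : ZMod p × ZMod p => cc.1 ≠ cc.2) with hD
  set W : ZMod p × ZMod p → ℝ := fun cc => q cc.1 * q cc.2 with hW
  have hW0 : ∀ cc, 0 ≤ W cc := fun cc => mul_nonneg (hq0 _) (hq0 _)
  -- total sum of W is 1
  have htotal : ∑ cc ∈ Finset.univ ×ˢ Finset.univ, W cc = 1 := by
    rw [Finset.sum_product]
    simp only [hW]
    rw [← Finset.sum_mul_sum, hq1, one_mul]
  -- diagonal sum
  have hdiag : ∑ cc ∈ (Finset.univ ×ˢ Finset.univ).filter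
      (fun cc : ZMod p × ZMod p => cc.1 = cc.2), W cc ≤ 1 - α := by
    have he : ∑ cc ∈ (Finset.univ ×ˢ Finset.univ).filter
        (fun cc : ZMod p × ZMod p => cc.1 = cc.2), W cc = ∑ c : ZMod p, q c * q c := by
      refine Finset.sum_nbij' (fun cc => cc.1) (fun c => (c, c)) ?_ ?_ ?_ ?_ ?_
      · intro cc _; exact Finset.mem_univ _
      · intro c _; simp
      · intro cc hcc; simp only [Finset.mem_filter] at hcc
        exact Prod.ext rfl hcc.2
      · intro c _; rfl
      · intro cc hcc; simp only [Finset.mem_filter] at hcc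
        simp only [hW]; rw [hcc.2]
    rw [he]
    calc ∑ c : ZMod p, q c * q c ≤ ∑ c : ZMod p, (1 - α) * q c := by
          refine Finset.sum_le_sum fun c _ => ?_
          exact mul_le_mul_of_nonneg_right (hbal c) (hq0 c)
      _ = 1 - α := by rw [← Finset.mul_sum, hq1, mul_one]
  have hsplit : ∑ cc ∈ D, W cc
      = 1 - ∑ cc ∈ (Finset.univ ×ˢ Finset.univ).filter
          (fun cc : ZMod p × ZMod p => cc.1 = cc.2), W cc := by
    have := Finset.sum_filter_add_sum_filter_not (Finset.univ ×ˢ Finset.univ)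
      (fun cc : ZMod p × ZMod p => cc.1 = cc.2) W
    rw [htotal] at this
    have hDeq : D = (Finset.univ ×ˢ Finset.univ).filter
        (fun cc : ZMod p × ZMod p => ¬ cc.1 = cc.2) := by rw [hD]
    rw [hDeq]; linarith
  set W' : ℝ := ∑ cc ∈ D, W cc with hW'
  have hW'α : α ≤ W' := by linarith [hsplit, hdiag]
  have hW'pos : 0 < W' := lt_of_lt_of_le hα hW'α
  refine ⟨fun cc => W cc / W', fun cc => div_nonneg (hW0 cc) hW'pos.le, ?_, ?_⟩
  · rw [← Finset.sum_div, ← hW', div_self hW'pos.ne']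
  intro s
  -- key: ‖phi q s‖^2 = 1 - ∑_{cc ∈ D} W cc * Fgap (s * (cc.1 - cc.2))
  have hsq : ‖phi q s‖ ^ 2 = 1 - ∑ cc ∈ D, W cc * Fgap (s * (cc.1 - cc.2)) := by
    rw [norm_phi_sq q s]
    have h1 : ∑ c : ZMod p, ∑ c' : ZMod p, q c * q c' * (ZMod.stdAddChar (s * (c - c'))).re
        = ∑ cc ∈ Finset.univ ×ˢ Finset.univ,
            (W cc - W cc * Fgap (s * (cc.1 - cc.2))) := by
      rw [Finset.sum_product]
      refine Finset.sum_congr rfl fun c _ => Finset.sum_congr rfl fun c' _ => ?_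
      simp only [hW, Fgap]; ring
    rw [h1, Finset.sum_sub_distrib, htotal]
    congr 1
    -- off-diagonal terms are the only nonzero ones
    rw [← Finset.sum_filter_add_sum_filter_not (Finset.univ ×ˢ Finset.univ)
      (fun cc : ZMod p × ZMod p => cc.1 ≠ cc.2) (fun cc => W cc * Fgap (s * (cc.1 - cc.2)))]
    have hzero : ∑ cc ∈ (Finset.univ ×ˢ Finset.univ).filter
        (fun cc : ZMod p × ZMod p => ¬ cc.1 ≠ cc.2),
        W cc * Fgap (s * (cc.1 - cc.2)) = 0 := by
      refine Finset.sum_eq_zero fun cc hcc => ?_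
      simp only [Finset.mem_filter, not_not] at hcc
      rw [hcc.2]; simp [Fgap_zero]
    rw [hzero, add_zero]
  set L : ℝ := ∑ cc ∈ D, (W cc / W') * Fgap (s * (cc.1 - cc.2)) with hL
  have hL0 : 0 ≤ L := Finset.sum_nonneg fun cc _ =>
    mul_nonneg (div_nonneg (hW0 cc) hW'pos.le) (Fgap_nonneg _)
  have hDL : ∑ cc ∈ D, W cc * Fgap (s * (cc.1 - cc.2)) = W' * L := by
    rw [hL, Finset.mul_sum]
    refine Finset.sum_congr rfl fun cc _ => ?_
    field_simp
  have hsq2 : ‖phi q s‖ ^ 2 ≤ Real.exp (-(α * L)) := by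
    rw [hsq, hDL]
    have h2 : 1 - W' * L ≤ 1 - α * L := by nlinarith
    have h3 : 1 - α * L ≤ Real.exp (-(α * L)) := by
      have := Real.add_one_le_exp (-(α * L)); linarith
    linarith
  have hnorm : ‖phi q s‖ ≤ Real.exp (-(α * L) / 2) := by
    have h4 : ‖phi q s‖ ^ 2 ≤ Real.exp (-(α * L) / 2) ^ 2 := by
      have he : Real.exp (-(α * L) / 2) ^ 2 = Real.exp (-(α * L)) := by
        rw [← Real.exp_nat_mul]; congr 1; push_cast; ring
      rw [he]; exact hsq2
    exact (pow_le_pow_iff_left₀ (norm_nonneg _) (Real.exp_nonneg _) two_ne_zero).1 h4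
  have hmono : ‖phi q s‖ ^ m ≤ Real.exp (-(↑m * α / 2) * L) := by
    calc ‖phi q s‖ ^ m ≤ Real.exp (-(α * L) / 2) ^ m :=
          pow_le_pow_left₀ (norm_nonneg _) hnorm m
      _ = Real.exp (-(↑m * α / 2) * L) := by
          rw [← Real.exp_nat_mul]; congr 1; push_cast; ring
  have hjensen := (convexOn_exp).map_sum_le (t := D)
      (w := fun cc => W cc / W')
      (p := fun cc => -(↑m * α / 2) * Fgap (s * (cc.1 - cc.2)))
      (fun cc _ => div_nonneg (hW0 cc) hW'pos.le)
      (by rw [← Finset.sum_div, ← hW', div_self hW'pos.ne'])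
      (fun cc _ => Set.mem_univ _)
  calc ‖phi q s‖ ^ m ≤ Real.exp (-(↑m * α / 2) * L) := hmono
    _ = Real.exp (∑ cc ∈ D, (W cc / W') • (-(↑m * α / 2) * Fgap (s * (cc.1 - cc.2)))) := by
        congr 1
        rw [hL, Finset.mul_sum]
        refine Finset.sum_congr rfl fun cc _ => ?_
        simp only [smul_eq_mul]; ring
    _ ≤ ∑ cc ∈ D, (W cc / W') • Real.exp (-(↑m * α / 2) * Fgap (s * (cc.1 - cc.2))) := hjensen
    _ = ∑ cc ∈ D, (W cc / W') * Real.exp (-(↑m * α / 2) * Fgap (s * (cc.1 - cc.2))) := by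
        simp only [smul_eq_mul]

lemma jordan {θ : ℝ} (h0 : 0 ≤ θ) (h1 : θ ≤ Real.pi) :
    2 * θ ^ 2 / Real.pi ^ 2 ≤ 1 - Real.cos θ := by
  have hs : Real.sin (θ / 2) ^ 2 = (1 - Real.cos θ) / 2 := by
    have hc := Real.cos_two_mul (θ / 2)
    have h2 : 2 * (θ / 2) = θ := by ring
    rw [h2] at hc
    have hpy := Real.sin_sq_add_cos_sq (θ / 2)
    linarith
  have hj : 2 / Real.pi * (θ / 2) ≤ Real.sin (θ / 2) :=
    Real.mul_le_sin (by linarith) (by linarith)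
  have hpi : (0 : ℝ) < Real.pi := Real.pi_pos
  have h2 : (2 / Real.pi * (θ / 2)) ^ 2 ≤ Real.sin (θ / 2) ^ 2 := by
    apply pow_le_pow_left₀ (by positivity) hj
  rw [hs] at h2
  have : (2 / Real.pi * (θ / 2)) ^ 2 = θ ^ 2 / Real.pi ^ 2 := by
    field_simp
  rw [this] at h2
  rw [mul_div_assoc]
  linarith

lemma sum_exp_le_integral {β : ℝ} (hβ : 0 < β) (K : ℕ) :
    ∑ k ∈ Finset.Icc 1 K, Real.exp (-β * (k : ℝ) ^ 2) ≤ Real.sqrt (Real.pi / β) / 2 := by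
  have hint : Integrable (fun x : ℝ => Real.exp (-β * x ^ 2)) := by
    simpa using integrable_exp_neg_mul_sq hβ
  have hcont : Continuous (fun x : ℝ => Real.exp (-β * x ^ 2)) := by continuity
  have step : ∀ K : ℕ, ∑ k ∈ Finset.Icc 1 K, Real.exp (-β * (k : ℝ) ^ 2)
      ≤ ∫ x in (0:ℝ)..(K:ℝ), Real.exp (-β * x ^ 2) := by
    intro K
    induction K with
    | zero => simp
    | succ K ih =>
      rw [Finset.sum_Icc_succ_top (by omega : 1 ≤ K + 1)]
      have hadj : ∫ x in (0:ℝ)..((K+1:ℕ):ℝ), Real.exp (-β * x ^ 2)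
          = (∫ x in (0:ℝ)..(K:ℝ), Real.exp (-β * x ^ 2))
            + ∫ x in (K:ℝ)..((K+1:ℕ):ℝ), Real.exp (-β * x ^ 2) := by
        rw [intervalIntegral.integral_add_adjacent_intervals] <;>
          exact hcont.intervalIntegrable _ _
      rw [hadj]
      have hlast : Real.exp (-β * ((K+1:ℕ) : ℝ) ^ 2)
          ≤ ∫ x in (K:ℝ)..((K+1:ℕ):ℝ), Real.exp (-β * x ^ 2) := by
        have hKK : (K : ℝ) ≤ ((K+1:ℕ):ℝ) := by push_cast; linarith
        have hconst : ∫ x in (K:ℝ)..((K+1:ℕ):ℝ), Real.exp (-β * ((K+1:ℕ):ℝ) ^ 2)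
            = Real.exp (-β * ((K+1:ℕ):ℝ) ^ 2) := by
          rw [intervalIntegral.integral_const]
          have h1 : ((K+1:ℕ):ℝ) - (K:ℝ) = 1 := by push_cast; ring
          rw [h1, one_smul]
        rw [← hconst]
        apply intervalIntegral.integral_mono_on hKK
          (intervalIntegrable_const) (hcont.intervalIntegrable _ _)
        intro x hx
        apply Real.exp_le_exp.2
        have hx0 : 0 ≤ x := le_trans (Nat.cast_nonneg K) hx.1
        have : x ^ 2 ≤ ((K+1:ℕ):ℝ) ^ 2 := by
          apply pow_le_pow_left₀ hx0 hx.2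
        nlinarith
      push_cast at *
      linarith
  calc ∑ k ∈ Finset.Icc 1 K, Real.exp (-β * (k : ℝ) ^ 2)
      ≤ ∫ x in (0:ℝ)..(K:ℝ), Real.exp (-β * x ^ 2) := step K
    _ ≤ ∫ x in Set.Ioi (0:ℝ), Real.exp (-β * x ^ 2) := by
        rw [intervalIntegral.integral_of_le (Nat.cast_nonneg K)]
        apply setIntegral_mono_set hint.integrableOn
        · exact Filter.Eventually.of_forall fun x => (Real.exp_pos _).le
        · exact Filter.Eventually.of_forall fun x hx => hx.1
    _ = Real.sqrt (Real.pi / β) / 2 := integral_gaussian_Ioi β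

lemma Fgap_lower {P : ℕ} [NeZero P] (s : ZMod P) (hs : s ≠ 0) {c : ℝ} (hc : 0 < c) :
    Real.exp (-c * Fgap s) ≤ Real.exp (-(8 * c / (P:ℝ)^2) * (s.val : ℝ)^2)
      + Real.exp (-(8 * c / (P:ℝ)^2) * ((P:ℝ) - (s.val : ℝ))^2) := by
  have hP1 : 1 ≤ P := Nat.one_le_iff_ne_zero.2 (NeZero.ne P)
  have hPpos : (0:ℝ) < P := by exact_mod_cast Nat.pos_of_ne_zero (NeZero.ne P)
  have hk1 : 1 ≤ s.val := Nat.one_le_iff_ne_zero.2 (fun h => hs (by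
    rwa [← ZMod.val_eq_zero]))
  have hkP : s.val < P := ZMod.val_lt s
  set k : ℝ := (s.val : ℝ) with hkdef
  have hk1' : (1:ℝ) ≤ k := by simp only [hkdef]; exact_mod_cast hk1
  have hkP' : k ≤ (P:ℝ) - 1 := by
    have : (s.val : ℝ) ≤ (P:ℝ) - 1 := by
      have : s.val ≤ P - 1 := by omega
      calc (s.val:ℝ) ≤ ((P-1:ℕ):ℝ) := by exact_mod_cast this
        _ = (P:ℝ) - 1 := by push_cast [Nat.cast_sub hP1]; ring
    exact this
  have hFgap : Fgap s = 1 - Real.cos (2 * Real.pi * k / P) := by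
    rw [Fgap, re_stdAddChar]
  have hpi := Real.pi_pos
  rcases le_or_gt (2 * s.val) P with hcase | hcase
  · -- k ≤ P/2 : use first term
    have hθ0 : 0 ≤ 2 * Real.pi * k / P := by positivity
    have hθ1 : 2 * Real.pi * k / P ≤ Real.pi := by
      rw [div_le_iff₀ hPpos]
      have : 2 * k ≤ (P:ℝ) := by simp only [hkdef]; exact_mod_cast hcase
      nlinarith
    have hJ := jordan hθ0 hθ1
    have hF : 8 * k^2 / (P:ℝ)^2 ≤ Fgap s := by
      rw [hFgap]
      have heq : 2 * (2 * Real.pi * k / P) ^ 2 / Real.pi ^ 2 = 8 * k^2 / (P:ℝ)^2 := by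
        field_simp; ring
      rw [heq] at hJ; exact hJ
    have : Real.exp (-c * Fgap s) ≤ Real.exp (-(8 * c / (P:ℝ)^2) * k^2) := by
      apply Real.exp_le_exp.2
      have h5 := mul_le_mul_of_nonneg_left hF hc.le
      have heq2 : c * (8 * k^2 / (P:ℝ)^2) = (8 * c / (P:ℝ)^2) * k^2 := by ring
      linarith
    exact le_add_of_le_of_nonneg this (Real.exp_pos _).le
  · -- k > P/2 : use second term
    have hcos : Real.cos (2 * Real.pi * k / P) = Real.cos (2 * Real.pi * ((P:ℝ) - k) / P) := by
      have : 2 * Real.pi * ((P:ℝ) - k) / P = 2 * Real.pi - 2 * Real.pi * k / P := by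
        field_simp
      rw [this, Real.cos_two_pi_sub]
    set k' : ℝ := (P:ℝ) - k with hk'def
    have hk'0 : 0 ≤ k' := by simp [hk'def]; linarith
    have hθ0 : 0 ≤ 2 * Real.pi * k' / P := by positivity
    have hθ1 : 2 * Real.pi * k' / P ≤ Real.pi := by
      rw [div_le_iff₀ hPpos]
      have : 2 * k' ≤ (P:ℝ) := by
        have : (P:ℝ) < 2 * k := by simp only [hkdef]; exact_mod_cast hcase
        simp only [hk'def]; linarith
      nlinarith
    have hJ := jordan hθ0 hθ1
    have hF : 8 * k'^2 / (P:ℝ)^2 ≤ Fgap s := by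
      rw [hFgap, hcos]
      have heq : 2 * (2 * Real.pi * k' / P) ^ 2 / Real.pi ^ 2 = 8 * k'^2 / (P:ℝ)^2 := by
        field_simp; ring
      rw [heq] at hJ; exact hJ
    have : Real.exp (-c * Fgap s) ≤ Real.exp (-(8 * c / (P:ℝ)^2) * k'^2) := by
      apply Real.exp_le_exp.2
      have h5 := mul_le_mul_of_nonneg_left hF hc.le
      have heq2 : c * (8 * k'^2 / (P:ℝ)^2) = (8 * c / (P:ℝ)^2) * k'^2 := by ring
      linarith
    exact le_add_of_nonneg_of_le (Real.exp_pos _).le this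

lemma G_bound {P : ℕ} [NeZero P] {c : ℝ} (hc : 0 < c) :
    ∑ s ∈ ({(0 : ZMod P)}ᶜ : Finset (ZMod P)), Real.exp (-c * Fgap s)
      ≤ (P:ℝ) * Real.sqrt (Real.pi / (8 * c)) := by
  have hP1 : 1 ≤ P := Nat.one_le_iff_ne_zero.2 (NeZero.ne P)
  have hPpos : (0:ℝ) < P := by exact_mod_cast Nat.pos_of_ne_zero (NeZero.ne P)
  set β : ℝ := 8 * c / (P:ℝ)^2 with hβdef
  have hβ : 0 < β := by positivity
  have hval : ∀ g : ℝ → ℝ, ∑ s ∈ ({(0 : ZMod P)}ᶜ : Finset (ZMod P)), g (s.val : ℝ)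
      = ∑ k ∈ Finset.Icc 1 (P-1), g (k : ℝ) := by
    intro g
    refine Finset.sum_nbij' (fun s => s.val) (fun k => (k : ZMod P)) ?_ ?_ ?_ ?_ ?_
    · intro s hsne
      simp only [Finset.mem_compl, Finset.mem_singleton] at hsne
      have := ZMod.val_lt s
      have : s.val ≠ 0 := fun h => hsne (by rwa [← ZMod.val_eq_zero])
      simp only [Finset.mem_Icc]
      omega
    · intro k hk
      simp only [Finset.mem_Icc] at hk
      simp only [Finset.mem_compl, Finset.mem_singleton]
      intro h
      have : (k : ZMod P).val = k := ZMod.val_cast_of_lt (by omega)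
      rw [h, ZMod.val_zero] at this
      omega
    · intro s _; exact ZMod.natCast_rightInverse s
    · intro k hk
      simp only [Finset.mem_Icc] at hk
      exact ZMod.val_cast_of_lt (by omega)
    · intro s _; rfl
  calc ∑ s ∈ ({(0 : ZMod P)}ᶜ : Finset (ZMod P)), Real.exp (-c * Fgap s)
      ≤ ∑ s ∈ ({(0 : ZMod P)}ᶜ : Finset (ZMod P)),
          (Real.exp (-β * (s.val : ℝ)^2) + Real.exp (-β * ((P:ℝ) - (s.val : ℝ))^2)) := by
        refine Finset.sum_le_sum fun s hsne => ?_
        simp only [Finset.mem_compl, Finset.mem_singleton] at hsne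
        exact Fgap_lower s hsne hc
    _ = (∑ k ∈ Finset.Icc 1 (P-1), Real.exp (-β * (k:ℝ)^2))
        + ∑ k ∈ Finset.Icc 1 (P-1), Real.exp (-β * ((P:ℝ) - (k:ℝ))^2) := by
        rw [Finset.sum_add_distrib]
        congr 1
        · exact hval (fun x => Real.exp (-β * x^2))
        · exact hval (fun x => Real.exp (-β * ((P:ℝ) - x)^2))
    _ = 2 * ∑ k ∈ Finset.Icc 1 (P-1), Real.exp (-β * (k:ℝ)^2) := by
        have hrefl : ∑ k ∈ Finset.Icc 1 (P-1), Real.exp (-β * ((P:ℝ) - (k:ℝ))^2)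
            = ∑ k ∈ Finset.Icc 1 (P-1), Real.exp (-β * (k:ℝ)^2) := by
          refine Finset.sum_nbij' (fun k => P - k) (fun k => P - k) ?_ ?_ ?_ ?_ ?_ <;>
            intro k hk <;> simp only [Finset.mem_Icc] at *
          · omega
          · omega
          · omega
          · omega
          · have : ((P - k : ℕ) : ℝ) = (P:ℝ) - (k:ℝ) := by
              have : k ≤ P := by omega
              push_cast [Nat.cast_sub this]; ring
            rw [this]
        rw [hrefl]; ring
    _ ≤ 2 * (Real.sqrt (Real.pi / β) / 2) := by
        have := sum_exp_le_integral hβ (P-1)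
        linarith
    _ = (P:ℝ) * Real.sqrt (Real.pi / (8 * c)) := by
        rw [hβdef]
        have : Real.pi / (8 * c / (P:ℝ)^2) = (P:ℝ)^2 * (Real.pi / (8 * c)) := by
          field_simp
        rw [this, Real.sqrt_mul (by positivity), Real.sqrt_sq hPpos.le]
        ring

lemma finite_elo {p : ℕ} [hpp : Fact p.Prime] {ι : Type*} [Fintype ι] [DecidableEq ι]
    (q : ZMod p → ℝ) (hq0 : ∀ c, 0 ≤ q c) (hq1 : ∑ c, q c = 1)
    {α : ℝ} (hα : 0 < α) (hbal : ∀ c, q c ≤ 1 - α)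
    {m : ℕ} (hm : 0 < m)
    (u : ι → ZMod p) (hcard : m ≤ (Finset.univ.filter fun j => u j ≠ 0).card)
    (r : ZMod p) :
    |(∑ v : ι → ZMod p, (∏ j, q (v j)) * (if ∑ j, v j * u j = r then 1 else 0)) - 1 / p|
      ≤ 2 / Real.sqrt (α * m) := by
  have hppos : (0:ℝ) < p := by exact_mod_cast hpp.out.pos
  have hmpos : (0:ℝ) < m := by exact_mod_cast hm
  set P₀ : ℝ := ∑ v : ι → ZMod p, (∏ j, q (v j)) * (if ∑ j, v j * u j = r then 1 else 0)
    with hP₀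
  obtain ⟨T, hTsub, hTcard⟩ := Finset.exists_subset_card_eq hcard
  have hTne : ∀ j ∈ T, u j ≠ 0 := fun j hj => (Finset.mem_filter.1 (hTsub hj)).2
  set Sm : ℝ := ∑ s ∈ ({(0 : ZMod p)}ᶜ : Finset (ZMod p)), ‖phi q s‖ ^ m with hSm
  -- Master bound
  have master : |P₀ - 1 / p| ≤ (p:ℝ)⁻¹ * Sm := by
    have hsplit : ∑ t : ZMod p, ZMod.stdAddChar (-(t * r)) * ∏ j, phi q (t * u j)
        = (∑ t ∈ ({(0 : ZMod p)}ᶜ : Finset (ZMod p)),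
            ZMod.stdAddChar (-(t * r)) * ∏ j, phi q (t * u j)) + 1 := by
      rw [← Finset.sum_compl_add_sum ({(0 : ZMod p)} : Finset (ZMod p))]
      congr 1
      rw [Finset.sum_singleton]
      simp [phi_zero hq1]
    have hC : ((P₀ - 1 / p : ℝ) : ℂ) = (p : ℂ)⁻¹ * ∑ t ∈ ({(0 : ZMod p)}ᶜ : Finset (ZMod p)),
        ZMod.stdAddChar (-(t * r)) * ∏ j, phi q (t * u j) := by
      push_cast
      rw [hP₀, fourier_identity q u r, hsplit]
      have hpne : (p:ℂ) ≠ 0 := by exact_mod_cast hppos.ne'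
      field_simp
      rw [add_sub_cancel_right]
      simp_rw [mul_comm r]
    have habs : |P₀ - 1 / p| = ‖((P₀ - 1 / p : ℝ) : ℂ)‖ := by
      rw [Complex.norm_real, Real.norm_eq_abs]
    rw [habs, hC]
    calc ‖(p : ℂ)⁻¹ * ∑ t ∈ ({(0 : ZMod p)}ᶜ : Finset (ZMod p)),
          ZMod.stdAddChar (-(t * r)) * ∏ j, phi q (t * u j)‖
        ≤ (p:ℝ)⁻¹ * ∑ t ∈ ({(0 : ZMod p)}ᶜ : Finset (ZMod p)),
            ∏ j, ‖phi q (t * u j)‖ := by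
          rw [norm_mul]
          gcongr
          · simp
          calc ‖∑ t ∈ ({(0 : ZMod p)}ᶜ : Finset (ZMod p)),
              ZMod.stdAddChar (-(t * r)) * ∏ j, phi q (t * u j)‖
              ≤ ∑ t ∈ ({(0 : ZMod p)}ᶜ : Finset (ZMod p)),
                ‖ZMod.stdAddChar (-(t * r)) * ∏ j, phi q (t * u j)‖ := norm_sum_le _ _
            _ = ∑ t ∈ ({(0 : ZMod p)}ᶜ : Finset (ZMod p)), ∏ j, ‖phi q (t * u j)‖ := by
                refine Finset.sum_congr rfl fun t _ => ?_
                rw [norm_mul, norm_stdAddChar, one_mul, norm_prod]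
      _ ≤ (p:ℝ)⁻¹ * ∑ t ∈ ({(0 : ZMod p)}ᶜ : Finset (ZMod p)),
            (m:ℝ)⁻¹ * ∑ j ∈ T, ‖phi q (t * u j)‖ ^ m := by
          gcongr with t ht
          calc ∏ j, ‖phi q (t * u j)‖ ≤ ∏ j ∈ T, ‖phi q (t * u j)‖ :=
                prod_le_subset _ (fun j => norm_nonneg _)
                  (fun j => norm_phi_le_one hq0 hq1 _)
            _ ≤ (m:ℝ)⁻¹ * ∑ j ∈ T, ‖phi q (t * u j)‖ ^ m :=
                amgm hm hTcard _ (fun j => norm_nonneg _)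
      _ = (p:ℝ)⁻¹ * Sm := by
          congr 1
          rw [← Finset.mul_sum, Finset.sum_comm]
          have : ∀ j ∈ T, ∑ t ∈ ({(0 : ZMod p)}ᶜ : Finset (ZMod p)), ‖phi q (t * u j)‖ ^ m
              = Sm := fun j hj => reindex_sum (fun x => ‖phi q x‖ ^ m) (hTne j hj)
          rw [Finset.sum_congr rfl this, Finset.sum_const, hTcard, nsmul_eq_mul]
          field_simp
  -- Bound Sm by the Gaussian-type sum
  have hc : (0:ℝ) < (m:ℝ) * α / 2 := by positivity
  have hSmG : Sm ≤ (p:ℝ) * Real.sqrt (Real.pi / (8 * ((m:ℝ) * α / 2))) := by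
    obtain ⟨ν, hν0, hν1, hνb⟩ := norm_phi_pow_le hq0 hq1 hα hbal m
    set D := (Finset.univ ×ˢ Finset.univ).filter
      (fun cc : ZMod p × ZMod p => cc.1 ≠ cc.2) with hD
    set G0 : ℝ := ∑ s ∈ ({(0 : ZMod p)}ᶜ : Finset (ZMod p)),
      Real.exp (-((m:ℝ) * α / 2) * Fgap s) with hG0
    calc Sm ≤ ∑ s ∈ ({(0 : ZMod p)}ᶜ : Finset (ZMod p)), ∑ cc ∈ D,
          ν cc * Real.exp (-((m:ℝ) * α / 2) * Fgap (s * (cc.1 - cc.2))) := by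
          rw [hSm]
          exact Finset.sum_le_sum fun s _ => hνb s
      _ = ∑ cc ∈ D, ν cc * ∑ s ∈ ({(0 : ZMod p)}ᶜ : Finset (ZMod p)),
            Real.exp (-((m:ℝ) * α / 2) * Fgap (s * (cc.1 - cc.2))) := by
          rw [Finset.sum_comm]
          exact Finset.sum_congr rfl fun cc _ => by rw [Finset.mul_sum]
      _ = ∑ cc ∈ D, ν cc * G0 := by
          refine Finset.sum_congr rfl fun cc hcc => ?_
          have hd : cc.1 - cc.2 ≠ 0 := by
            rw [hD, Finset.mem_filter] at hcc
            exact sub_ne_zero.2 hcc.2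
          rw [reindex_sum (fun x => Real.exp (-((m:ℝ) * α / 2) * Fgap x)) hd]
      _ = G0 := by rw [← Finset.sum_mul, hν1, one_mul]
      _ ≤ (p:ℝ) * Real.sqrt (Real.pi / (8 * ((m:ℝ) * α / 2))) := G_bound hc
  -- Conclude
  have hfinal : (p:ℝ)⁻¹ * ((p:ℝ) * Real.sqrt (Real.pi / (8 * ((m:ℝ) * α / 2))))
      ≤ 2 / Real.sqrt (α * m) := by
    rw [← mul_assoc, inv_mul_cancel₀ hppos.ne', one_mul]
    have h8 : 8 * ((m:ℝ) * α / 2) = 4 * (α * (m:ℝ)) := by ring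
    rw [h8]
    have hx : (0:ℝ) < α * m := by positivity
    have h2 : (2:ℝ) / Real.sqrt (α * m) = Real.sqrt (4 / (α * m)) := by
      rw [Real.sqrt_div (by norm_num : (0:ℝ) ≤ 4)]
      congr 1
      rw [show (4:ℝ) = 2^2 by norm_num, Real.sqrt_sq (by norm_num : (0:ℝ) ≤ 2)]
    rw [h2]
    apply Real.sqrt_le_sqrt
    rw [div_le_div_iff₀ (by positivity) hx]
    nlinarith [Real.pi_le_four, hx]
  calc |P₀ - 1/p| ≤ (p:ℝ)⁻¹ * Sm := master
    _ ≤ (p:ℝ)⁻¹ * ((p:ℝ) * Real.sqrt (Real.pi / (8 * ((m:ℝ) * α / 2)))) := by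
        gcongr
    _ ≤ 2 / Real.sqrt (α * m) := hfinal

end Helpers

/-- Forward Erdős–Littlewood–Offord for the Laplacian: if `w ∈ (ℤ/pℤ)^n` has no coordinate
value of multiplicity exceeding `n - m`, and `X` is of type `T_{i₀}` (the entries away from
`i₀` are i.i.d. `α`-balanced, and the `i₀`-entry is minus their sum), then for every `r`,
`|P(X·w = r) - 1/p| ≤ 2/√(αm)` provided `α ≥ 4/m`. -/
theorem forward_erdos_littlewood_offord_laplacian {Ω : Type*} [MeasureSpace Ω]
    [IsProbabilityMeasure (ℙ : Measure Ω)]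
    (p : ℕ) [Fact p.Prime]
    [MeasurableSpace (ZMod p)] [MeasurableSingletonClass (ZMod p)]
    (n m : ℕ) (hm : 0 < m) (hmn : m ≤ n)
    (α : ℝ) (hα0 : 0 < α) (hα1 : α ≤ 1) (hαm : 4 / (m : ℝ) ≤ α)
    (i₀ : Fin n)
    (X : Ω → Fin n → ZMod p)
    (hsum : ∀ ω, X ω i₀ = -∑ j ∈ Finset.univ.erase i₀, X ω j)
    (hmeas : ∀ j, Measurable fun ω => X ω j)
    (hindep : iIndepFun
      (fun j : {j : Fin n // j ≠ i₀} => fun ω => X ω j) ℙ)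
    (hident : ∀ j j' : {j : Fin n // j ≠ i₀},
      Measure.map (fun ω => X ω j) ℙ = Measure.map (fun ω => X ω j') ℙ)
    (hbal : ∀ j : Fin n, j ≠ i₀ → ∀ r : ZMod p,
      ℙ {ω | X ω j = r} ≤ ENNReal.ofReal (1 - α))
    (w : Fin n → ZMod p)
    (hmult : ∀ c : ZMod p, Set.ncard {j | w j = c} ≤ n - m) :
    ∀ r : ZMod p, |(ℙ {ω | ∑ j, X ω j * w j = r}).toReal - 1 / p|
      ≤ 2 / Real.sqrt (α * m) := by
  intro r
  classical
  set κ := {j : Fin n // j ≠ i₀} with hκ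
  set u : κ → ZMod p := fun j => w j.1 - w i₀ with hu
  -- m < n
  have hmlt : m < n := by
    have h1 := hmult (w i₀)
    have h2 : 1 ≤ Set.ncard {j | w j = w i₀} := by
      have : i₀ ∈ {j | w j = w i₀} := rfl
      have hfin : {j : Fin n | w j = w i₀}.Finite := Set.toFinite _
      have := (Set.ncard_pos hfin).2 ⟨i₀, rfl⟩
      omega
    omega
  have hn2 : 2 ≤ n := by omega
  -- pick an index different from i₀
  have hj₁ : ∃ j : Fin n, j ≠ i₀ := by
    rcases Nat.eq_zero_or_pos i₀.val with h | h
    · exact ⟨⟨1, by omega⟩, fun he => by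
        have := congrArg Fin.val he; simp at this; omega⟩
    · exact ⟨⟨0, by omega⟩, fun he => by
        have := congrArg Fin.val he; simp at this; omega⟩
  obtain ⟨j₁, hj₁ne⟩ := hj₁
  set q : ZMod p → ℝ := fun c => (ℙ {ω | X ω j₁ = c}).toReal with hq
  -- identical one-dim marginals
  have hqc : ∀ (j : κ) (c : ZMod p), ℙ {ω | X ω j.1 = c} = ℙ {ω | X ω j₁ = c} := by
    intro j c
    have h := hident j ⟨j₁, hj₁ne⟩
    have h1 : Measure.map (fun ω => X ω j.1) ℙ {c} = Measure.map (fun ω => X ω j₁) ℙ {c} := by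
      rw [h]
    rwa [Measure.map_apply (hmeas j.1) (measurableSet_singleton c),
      Measure.map_apply (hmeas j₁) (measurableSet_singleton c)] at h1
  have hq0 : ∀ c, 0 ≤ q c := fun c => ENNReal.toReal_nonneg
  have hq1sum : ∑ c : ZMod p, ℙ {ω | X ω j₁ = c} = 1 := by
    rw [← measure_univ (μ := (ℙ : Measure Ω))]
    rw [← measure_biUnion_finset ?_ ?_]
    · congr 1
      ext ω
      simp only [Set.mem_iUnion, Finset.mem_univ, Set.mem_setOf_eq, Set.mem_univ, iff_true]
      exact ⟨X ω j₁, trivial, rfl⟩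
    · intro c _ c' _ hcc'
      simp only [Function.onFun]
      rw [Set.disjoint_left]
      intro ω h1 h2
      exact hcc' (h1.symm.trans h2)
    · intro c _
      exact (hmeas j₁) (measurableSet_singleton c)
  have hq1 : ∑ c, q c = 1 := by
    rw [hq]
    rw [← ENNReal.toReal_sum (fun c _ => measure_ne_top _ _)]
    rw [hq1sum, ENNReal.toReal_one]
  have hbal' : ∀ c, q c ≤ 1 - α := by
    intro c
    have := hbal j₁ hj₁ne c
    exact ENNReal.toReal_le_of_le_ofReal (by linarith) this
  -- cardinality of nonzero u
  have hcard : m ≤ (Finset.univ.filter fun j : κ => u j ≠ 0).card := by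
    set A : Finset (Fin n) := Finset.univ.filter (fun j => w j = w i₀) with hA
    have hAcard : A.card ≤ n - m := by
      have := hmult (w i₀)
      have heq : {j : Fin n | w j = w i₀} = (A : Set (Fin n)) := by
        ext j; simp [hA]
      rw [heq, Set.ncard_coe_finset] at this
      exact this
    set B : Finset (Fin n) := Finset.univ.filter (fun j => j ≠ i₀ ∧ w j ≠ w i₀) with hB
    have hBcard : n - A.card ≤ B.card := by
      have hsub : Finset.univ \ (A ∪ {i₀}) ⊆ B := by
        intro j hj
        rw [Finset.mem_sdiff, Finset.mem_union] at hj
        push_neg at hj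
        obtain ⟨-, hjA, hji⟩ := hj
        simp only [hB, Finset.mem_filter, Finset.mem_univ, true_and]
        refine ⟨by simpa using hji, ?_⟩
        simpa [hA] using hjA
      have hAi : A ∪ {i₀} = A := by
        apply Finset.union_eq_left.2
        simp [hA]
      calc n - A.card = (Finset.univ \ (A ∪ {i₀})).card := by
            rw [hAi, Finset.card_sdiff_of_subset (Finset.subset_univ A), Finset.card_univ,
              Fintype.card_fin]
        _ ≤ B.card := Finset.card_le_card hsub
    have hBm : m ≤ B.card := by omega
    have hBsub : (B.subtype (fun j => j ≠ i₀)) ⊆ Finset.univ.filter (fun j : κ => u j ≠ 0) := by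
      intro j hj
      simp only [Finset.mem_subtype, hB, Finset.mem_filter, Finset.mem_univ, true_and] at hj ⊢
      rw [hu]
      exact sub_ne_zero.2 hj.2
    have hBsubcard : (B.subtype (fun j => j ≠ i₀)).card = B.card := by
      rw [Finset.card_subtype]
      congr 1
      apply Finset.filter_eq_self.2
      intro j hj
      simp only [hB, Finset.mem_filter] at hj
      exact hj.2.1
    calc m ≤ B.card := hBm
      _ = (B.subtype (fun j => j ≠ i₀)).card := hBsubcard.symm
      _ ≤ _ := Finset.card_le_card hBsub
  -- rewrite the sum
  have hS : ∀ ω, (∑ j, X ω j * w j) = ∑ j : κ, X ω j.1 * u j := by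
    intro ω
    have h1 : ∑ j, X ω j * w j
        = X ω i₀ * w i₀ + ∑ j ∈ Finset.univ.erase i₀, X ω j * w j :=
      (Finset.add_sum_erase _ _ (Finset.mem_univ i₀)).symm
    rw [h1, hsum ω]
    have h2 : ∑ j ∈ Finset.univ.erase i₀, X ω j * w j
        - (∑ j ∈ Finset.univ.erase i₀, X ω j) * w i₀
        = ∑ j ∈ Finset.univ.erase i₀, X ω j * (w j - w i₀) := by
      rw [Finset.sum_mul, ← Finset.sum_sub_distrib]
      exact Finset.sum_congr rfl fun j _ => by ring
    have h3 : ∑ j ∈ Finset.univ.erase i₀, X ω j * (w j - w i₀) = ∑ j : κ, X ω j.1 * u j := by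
      rw [hu]
      exact Finset.sum_subtype _ (fun x => by simp [Finset.mem_erase]) _
    rw [← h3, ← h2]
    ring
  -- event decomposition
  set Y : Ω → κ → ZMod p := fun ω j => X ω j.1 with hY
  set V : Finset (κ → ZMod p) := Finset.univ.filter (fun v => ∑ j, v j * u j = r) with hV
  have hE : {ω | ∑ j, X ω j * w j = r} = ⋃ v ∈ V, Y ⁻¹' {v} := by
    ext ω
    simp only [Set.mem_setOf_eq, Set.mem_iUnion, Set.mem_preimage, Set.mem_singleton_iff]
    constructor
    · intro h
      rw [hS ω] at h
      exact ⟨Y ω, Finset.mem_filter.2 ⟨Finset.mem_univ _, h⟩, rfl⟩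
    · rintro ⟨v, hv, rfl⟩
      rw [hS ω]
      exact (Finset.mem_filter.1 hv).2
  have hAv : ∀ v : κ → ZMod p, Y ⁻¹' {v} = ⋂ j : κ, (fun ω => X ω j.1) ⁻¹' {v j} := by
    intro v
    ext ω
    simp only [Set.mem_preimage, Set.mem_singleton_iff, Set.mem_iInter]
    exact ⟨fun h j => congrFun h j, fun h => funext h⟩
  have hAvmeas : ∀ v : κ → ZMod p, MeasurableSet (Y ⁻¹' {v}) := by
    intro v
    rw [hAv]
    exact MeasurableSet.iInter fun j => (hmeas j.1) (measurableSet_singleton _)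
  have hAvprob : ∀ v : κ → ZMod p, ℙ (Y ⁻¹' {v}) = ∏ j : κ, ℙ {ω | X ω j.1 = v j} := by
    intro v
    rw [hAv]
    have h := hindep.measure_inter_preimage_eq_mul Finset.univ
      (sets := fun j => {v j}) (fun j _ => measurableSet_singleton _)
    have h2 : (⋂ j ∈ Finset.univ, (fun ω => X ω (j : κ).1) ⁻¹' {v j})
        = ⋂ j : κ, (fun ω => X ω j.1) ⁻¹' {v j} := by
      simp
    rw [h2] at h
    rw [h]
    exact Finset.prod_congr rfl fun j _ => rfl
  have hPE : ℙ {ω | ∑ j, X ω j * w j = r} = ∑ v ∈ V, ∏ j : κ, ℙ {ω | X ω j.1 = v j} := by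
    rw [hE, measure_biUnion_finset ?_ (fun v _ => hAvmeas v)]
    · exact Finset.sum_congr rfl fun v _ => hAvprob v
    · intro v _ v' _ hvv'
      simp only [Function.onFun]
      rw [Set.disjoint_left]
      intro ω h1 h2
      simp only [Set.mem_preimage, Set.mem_singleton_iff] at h1 h2
      exact hvv' (h1.symm.trans h2)
  -- real version
  have hPEr : (ℙ {ω | ∑ j, X ω j * w j = r}).toReal
      = ∑ v : κ → ZMod p, (∏ j, q (v j)) * (if ∑ j, v j * u j = r then 1 else 0) := by
    rw [hPE, ENNReal.toReal_sum (fun v _ =>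
      (ENNReal.prod_lt_top (fun j _ => measure_lt_top _ _)).ne)]
    have step1 : ∀ v ∈ V, (∏ j : κ, ℙ {ω | X ω j.1 = v j}).toReal = ∏ j, q (v j) := by
      intro v _
      rw [ENNReal.toReal_prod]
      refine Finset.prod_congr rfl fun j _ => ?_
      rw [hqc j (v j)]
    rw [Finset.sum_congr rfl step1, hV, Finset.sum_filter]
    exact Finset.sum_congr rfl fun v _ => by split_ifs <;> simp
  rw [hPEr]
  exact finite_elo q hq0 hq1 hα0 hbal' hm u hcard r
end

section
/- Let W be a subspace of (ℤ/pℤ)^n contained in the set of vectors with zero coordinate sum, and suppose that every non-zero vector normal to W has support size greater than δn. Then W has no non-zero normal vector with some coordinate value of multiplicity between n - δn and n - 1. -/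
/-- If every non-zero normal vector of a zero-sum subspace `W ⊆ (ℤ/pℤ)^n` has support size
greater than `δn`, then `W` has no non-zero normal vector having some coordinate value of
multiplicity between `n - δn` and `n - 1`. -/
theorem no_high_multiplicity_normal_vector (p : ℕ) [Fact p.Prime] (n : ℕ) (δ : ℝ)
    (hδ : 0 < δ)
    (W : Submodule (ZMod p) (Fin n → ZMod p))
    (hzero : ∀ x ∈ W, ∑ i, x i = 0)
    (hsparse : ∀ u : Fin n → ZMod p, u ≠ 0 →
      (∀ x ∈ W, ∑ i, u i * x i = 0) → δ * n < (Set.ncard {i | u i ≠ 0} : ℝ)) :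
    ∀ u : Fin n → ZMod p, u ≠ 0 → (∀ x ∈ W, ∑ i, u i * x i = 0) →
      ∀ c : ZMod p, ¬ ((n : ℝ) - δ * n ≤ (Set.ncard {i | u i = c} : ℝ) ∧
        Set.ncard {i | u i = c} ≤ n - 1) := by
  rintro u hu hnorm c ⟨h1, h2⟩
  set v : Fin n → ZMod p := fun i => u i - c with hv
  have hvnorm : ∀ x ∈ W, ∑ i, v i * x i = 0 := by
    intro x hx
    have : ∑ i, v i * x i = (∑ i, u i * x i) - c * ∑ i, x i := by
      rw [Finset.mul_sum, ← Finset.sum_sub_distrib]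
      congr 1; ext i; ring
    rw [this, hnorm x hx, hzero x hx, mul_zero, sub_zero]
  by_cases hv0 : v = 0
  · -- u is constant c, so {i | u i = c} = univ, ncard = n
    have huniv : {i : Fin n | u i = c} = Set.univ := by
      ext i; simp only [Set.mem_setOf_eq, Set.mem_univ, iff_true]
      have := congrFun hv0 i
      simpa [hv, sub_eq_zero] using this
    have hn : Set.ncard {i : Fin n | u i = c} = n := by
      rw [huniv, Set.ncard_univ, Nat.card_eq_fintype_card, Fintype.card_fin]
    have hn1 : 1 ≤ n := by
      rcases Nat.eq_zero_or_pos n with h0 | h; swap; · exact h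
      exact absurd (funext fun i => (h0 ▸ i : Fin 0).elim0) hu
    omega
  · have hkey := hsparse v hv0 hvnorm
    have hcompl : {i : Fin n | v i ≠ 0} = {i : Fin n | u i = c}ᶜ := by
      ext i; simp [hv, sub_eq_zero]
    have hsum : Set.ncard {i : Fin n | u i = c} + Set.ncard ({i : Fin n | u i = c}ᶜ) = n := by
      rw [Set.ncard_add_ncard_compl, Nat.card_eq_fintype_card, Fintype.card_fin]
    rw [hcompl] at hkey
    have : (Set.ncard {i : Fin n | u i = c} : ℝ) + (Set.ncard ({i : Fin n | u i = c}ᶜ) : ℝ) = n := by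
      exact_mod_cast congrArg (Nat.cast : ℕ → ℝ) hsum
    linarith
end

section
/- Let P = { Σ_{i=1}^r x_i a_i : |x_i| ≤ N_i, x_i ∈ ℤ } be a symmetric generalized arithmetic progression in an abelian group G which is 2-proper (i.e., the representation of 2P = { Σ x_i a_i : |x_i| ≤ 2N_i } is one-to-one). Let X ⊆ G be a finite set with 0 ∈ X, let k = 2^l be a power of two, and suppose the k-fold sumset kX is contained in P. Then X ⊆ { Σ_{i=1}^r x_i a_i : |x_i| ≤ 2N_i/k }. -/
/-- Dividing trick for GAPs: if `P = {∑ xᵢaᵢ : |xᵢ| ≤ Nᵢ}` is a `2`-proper symmetric GAP,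
`0 ∈ X`, `k = 2^l`, and the `k`-fold sumset `kX` is contained in `P`, then
`X ⊆ {∑ xᵢaᵢ : |xᵢ| ≤ 2Nᵢ/k}`. -/
theorem gap_dividing_trick {G : Type*} [AddCommGroup G]
    (r : ℕ) (a : Fin r → G) (N : Fin r → ℕ) (hN : ∀ i, 0 < N i)
    (h2proper : ∀ x y : Fin r → ℤ, (∀ i, |x i| ≤ 2 * (N i : ℤ)) →
      (∀ i, |y i| ≤ 2 * (N i : ℤ)) → ∑ i, x i • a i = ∑ i, y i • a i → x = y)
    (X : Set G) (hX : X.Finite) (h0 : (0 : G) ∈ X)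
    (l : ℕ) (k : ℕ) (hk : k = 2 ^ l)
    (hsum : {g : G | ∃ f : Fin k → G, (∀ j, f j ∈ X) ∧ g = ∑ j, f j} ⊆
      {g : G | ∃ x : Fin r → ℤ, (∀ i, |x i| ≤ (N i : ℤ)) ∧ g = ∑ i, x i • a i}) :
    X ⊆ {g : G | ∃ x : Fin r → ℤ, (∀ i, (|x i| : ℝ) ≤ 2 * (N i : ℝ) / k) ∧
      g = ∑ i, x i • a i} := by
  intro g hg
  -- For each `m ≤ k`, `m • g ∈ P`.
  have key : ∀ m : ℕ, m ≤ k → ∃ x : Fin r → ℤ, (∀ i, |x i| ≤ (N i : ℤ)) ∧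
      (m • g : G) = ∑ i, x i • a i := by
    intro m hm
    refine hsum ⟨fun j => if (j : ℕ) < m then g else 0, fun j => ?_, ?_⟩
    · dsimp only; split
      · exact hg
      · exact h0
    · rw [Finset.sum_ite, Finset.sum_const, Finset.sum_const_zero, add_zero]
      congr 1
      have : Finset.univ.filter (fun j : Fin k => (j : ℕ) < m)
          = Finset.univ.map (Fin.castLEEmb hm) := by
        ext j
        simp only [Finset.mem_filter, Finset.mem_univ, true_and, Finset.mem_map,
          Fin.castLEEmb_apply]
        constructor
        · intro h; exact ⟨⟨j, h⟩, Fin.ext rfl⟩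
        · rintro ⟨x, rfl⟩; exact x.isLt
      rw [this, Finset.card_map, Finset.card_univ, Fintype.card_fin]
  have hk1 : 1 ≤ k := hk ▸ Nat.one_le_two_pow
  obtain ⟨x0, hx0, hgx0⟩ := key 1 hk1
  rw [one_smul] at hgx0
  -- `2 ^ j • g = ∑ (2 ^ j * x0 i) • a i`
  have hrep : ∀ j : ℕ, ((2 ^ j : ℕ) • g : G) = ∑ i, ((2 : ℤ) ^ j * x0 i) • a i := by
    intro j
    rw [hgx0, Finset.smul_sum]
    refine Finset.sum_congr rfl fun i _ => ?_
    rw [← natCast_zsmul (x0 i • a i) (2 ^ j), smul_smul]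
    push_cast
    ring_nf
  -- By induction, `|2 ^ j * x0 i| ≤ N i` for all `j ≤ l`.
  have claim : ∀ j : ℕ, j ≤ l → ∀ i, |(2 : ℤ) ^ j * x0 i| ≤ (N i : ℤ) := by
    intro j
    induction j with
    | zero => intro _ i; simpa using hx0 i
    | succ j ih =>
      intro hjl i
      have hj : j ≤ l := Nat.le_of_succ_le hjl
      have hmk : 2 ^ (j + 1) ≤ k := hk ▸ Nat.pow_le_pow_right (by norm_num) hjl
      obtain ⟨y, hy, hgy⟩ := key (2 ^ (j + 1)) hmk
      have hsums : ∑ i', ((2 : ℤ) ^ (j + 1) * x0 i') • a i' = ∑ i', y i' • a i' := by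
        rw [← hrep (j + 1), hgy]
      have hbound : ∀ i', |(2 : ℤ) ^ (j + 1) * x0 i'| ≤ 2 * (N i' : ℤ) := by
        intro i'
        have := ih hj i'
        calc |(2 : ℤ) ^ (j + 1) * x0 i'| = 2 * |(2 : ℤ) ^ j * x0 i'| := by
              rw [pow_succ, abs_mul, abs_mul, abs_mul]
              ring_nf
          _ ≤ 2 * (N i' : ℤ) := by linarith
      have heq := h2proper _ _ hbound
        (fun i' => le_trans (hy i') (by have := (N i' : ℤ).le_refl; nlinarith [Int.natCast_nonneg (N i')]))
        hsums
      have := congrFun heq i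
      rw [this]
      exact hy i
  -- Conclude.
  have hfin := claim l le_rfl
  refine ⟨x0, fun i => ?_, hgx0⟩
  have h1 : (2 : ℤ) ^ l * |x0 i| ≤ (N i : ℤ) := by
    have := hfin i
    rwa [abs_mul, abs_pow, abs_two] at this
  have h2 : ((2 : ℝ)) ^ l * (|x0 i| : ℝ) ≤ (N i : ℝ) := by exact_mod_cast h1
  have hkpos : (0 : ℝ) < (k : ℝ) := by
    rw [hk]; positivity
  rw [le_div_iff₀ hkpos]
  have hkr : (k : ℝ) = 2 ^ l := by rw [hk]; push_cast; ring
  rw [hkr]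
  nlinarith [abs_nonneg (x0 i), (Nat.cast_nonneg (N i) : (0:ℝ) ≤ N i), pow_pos (by norm_num : (0:ℝ) < 2) l]
end

section
/- Let A_3 > 0 and 0 < a_1 < 1. Then for all a_4 > 0 sufficiently small (depending on A_3, a_1), the following holds: for every Δ' > 2/(1-a_1) and all n sufficiently large (depending on A_3, a_1, a_4, Δ'), Σ_{k=1}^{⌊a_4 n⌋} C(n,k) A_3^k ( a_1 + (1-a_1) exp(-(Δ' log n / n) k) )^n ≤ 3 n^{-((1-a_1)Δ'/2 - 1)}. -/
set_option maxHeartbeats 1000000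

open Filter

private lemma exp_neg_le_aux (x : ℝ) (h0 : 0 ≤ x) (h1 : x ≤ 1) :
    Real.exp (-x) ≤ 1 - (1 - Real.exp (-1)) * x := by
  have h := convexOn_exp.2 (Set.mem_univ (-1:ℝ)) (Set.mem_univ (0:ℝ)) h0 (by linarith)
    (by ring : x + (1 - x) = 1)
  simp only [smul_eq_mul, mul_zero, add_zero, mul_neg, mul_one, Real.exp_zero] at h
  nlinarith [h]

private lemma geom_icc (m : ℕ) : ∑ k ∈ Finset.Icc 1 m, ((1:ℝ)/2)^(k-1) ≤ 2 := by
  have h : ∑ k ∈ Finset.Icc 1 m, ((1:ℝ)/2)^(k-1) = ∑ j ∈ Finset.range m, ((1:ℝ)/2)^j := by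
    apply Finset.sum_nbij' (fun k => k - 1) (fun j => j + 1) <;>
      simp_all [Finset.mem_Icc, Finset.mem_range] <;> omega
  rw [h]; exact sum_geometric_two_le m

/-- For `A₃ > 0` and `0 < a₁ < 1`, for all sufficiently small `a₄ > 0`, every
`Δ' > 2/(1-a₁)`, and all sufficiently large `n`,
`∑_{k=1}^{⌊a₄n⌋} C(n,k) A₃^k (a₁ + (1-a₁) exp(-(Δ' log n / n) k))^n ≤ 3 n^{-((1-a₁)Δ'/2 - 1)}`. -/
theorem binomial_sum_decay_bound (A₃ a₁ : ℝ) (hA₃ : 0 < A₃) (ha₁0 : 0 < a₁) (ha₁1 : a₁ < 1) :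
    ∃ a₄₀ : ℝ, 0 < a₄₀ ∧ ∀ a₄ : ℝ, 0 < a₄ → a₄ ≤ a₄₀ →
      ∀ Δ' : ℝ, 2 / (1 - a₁) < Δ' → ∃ N : ℕ, ∀ n : ℕ, N ≤ n →
        ∑ k ∈ Finset.Icc 1 ⌊a₄ * n⌋₊, (n.choose k : ℝ) * A₃ ^ k *
            (a₁ + (1 - a₁) * Real.exp (-(Δ' * Real.log n / n) * k)) ^ n
          ≤ 3 * (n : ℝ) ^ (-((1 - a₁) * Δ' / 2 - 1)) := by
  have hd1 : (0:ℝ) < 1 - a₁ := by linarith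
  set β : ℝ := 1 - Real.exp (-1) with hβdef
  have he2 : (2:ℝ) < Real.exp 1 := lt_trans (by norm_num) Real.exp_one_gt_d9
  have hβhalf : (1:ℝ)/2 < β := by
    have h1 : Real.exp (-1) = 1 / Real.exp 1 := by rw [Real.exp_neg, one_div]
    have h2 : 1 / Real.exp 1 < 1/2 := one_div_lt_one_div_of_lt (by norm_num) he2
    rw [hβdef]; linarith
  have hβ1 : β < 1 := by
    have := Real.exp_pos (-1:ℝ); rw [hβdef]; linarith
  clear_value β
  set δ : ℝ := (1 - a₁) * β with hδdef
  have hδ : 0 < δ := by rw [hδdef]; exact mul_pos hd1 (by linarith)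
  clear_value δ
  have hx1 : 0 < Real.exp (δ/4) - 1 := by
    have := Real.add_one_le_exp (δ/4); linarith
  set x₀ : ℝ := min 1 ((Real.exp (δ/4) - 1) / A₃) with hx₀def
  have hx₀pos : 0 < x₀ := lt_min one_pos (div_pos hx1 hA₃)
  have hx₀1 : x₀ ≤ 1 := min_le_left _ _
  have hAx₀ : 1 + A₃ * x₀ ≤ Real.exp (δ/4) := by
    have h := mul_le_mul_of_nonneg_left (min_le_right 1 ((Real.exp (δ/4) - 1) / A₃)) hA₃.le
    rw [mul_div_cancel₀ _ (ne_of_gt hA₃)] at h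
    rw [hx₀def]; linarith
  have hlogx₀ : Real.log x₀ ≤ 0 := Real.log_nonpos hx₀pos.le hx₀1
  clear_value x₀
  set L : ℝ := 1 - Real.log x₀ with hLdef
  have hL1 : 1 ≤ L := by rw [hLdef]; linarith
  have hL0 : 0 < L := by linarith
  have hnegL : -Real.log x₀ ≤ L := by rw [hLdef]; linarith
  clear_value L
  refine ⟨min 1 (δ / (4 * L)), lt_min one_pos (div_pos hδ (by linarith)), ?_⟩
  intro a₄ ha₄0 ha₄le Δ' hΔ'
  have ha₄1 : a₄ ≤ 1 := ha₄le.trans (min_le_left _ _)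
  have ha₄L : a₄ * (-Real.log x₀) ≤ δ/4 := by
    have h1 : a₄ ≤ δ / (4 * L) := ha₄le.trans (min_le_right _ _)
    have h2 : a₄ * (-Real.log x₀) ≤ (δ / (4*L)) * L := by
      apply mul_le_mul h1 hnegL (by linarith) (le_of_lt (div_pos hδ (by linarith)))
    have h3 : (δ / (4*L)) * L = δ/4 := by field_simp
    linarith
  have hΔ'pos : 0 < Δ' := lt_trans (div_pos (by norm_num) hd1) hΔ'
  have hΔ'2 : 2 < (1 - a₁) * Δ' := by
    rw [div_lt_iff₀ hd1] at hΔ'; linarith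
  set ε : ℝ := (1 - a₁) * Δ' / 2 - 1 with hεdef
  have hε : 0 < ε := by rw [hεdef]; linarith
  set θ : ℝ := (1 - a₁) * β * Δ' with hθdef
  have hgap : 0 < θ - 1 - ε := by
    have hkey : (1-a₁)*β*Δ' - 1 - ((1-a₁)*Δ'/2 - 1) = (1-a₁)*Δ'*(β-1/2) := by ring
    have hpos : 0 < (1-a₁)*Δ'*(β-1/2) :=
      mul_pos (mul_pos hd1 hΔ'pos) (by linarith)
    rw [hθdef, hεdef]; linarith
  clear_value ε θ
  have hθ1 : 1 < θ := by linarith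
  -- eventualities
  have hev1 : ∀ᶠ n : ℕ in atTop, A₃ * (n:ℝ) ^ (1-θ) ≤ 1/2 := by
    have h : Tendsto (fun n : ℕ => (n:ℝ) ^ (-(θ-1))) atTop (nhds 0) :=
      (tendsto_rpow_neg_atTop (by linarith)).comp tendsto_natCast_atTop_atTop
    have h2 : Tendsto (fun n : ℕ => A₃ * (n:ℝ) ^ (1-θ)) atTop (nhds (A₃ * 0)) := by
      have e : (1 - θ) = -(θ-1) := by ring
      rw [e]; exact h.const_mul A₃
    exact h2.eventually_le_const (by norm_num)
  have hev2 : ∀ᶠ n : ℕ in atTop, 2*A₃ ≤ (n:ℝ)^(θ-1-ε) :=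
    ((tendsto_rpow_atTop hgap).comp tendsto_natCast_atTop_atTop).eventually_ge_atTop (2*A₃)
  have hev3 : ∀ᶠ n : ℕ in atTop, (n:ℝ)^((1:ℝ)+ε) * Real.exp (-(δ/2) * n) ≤ 1 := by
    have h := (tendsto_rpow_mul_exp_neg_mul_atTop_nhds_zero (1+ε) (δ/2) (by linarith)).comp
      tendsto_natCast_atTop_atTop
    exact h.eventually_le_const one_pos
  obtain ⟨N, hN⟩ := eventually_atTop.1 (hev1.and (hev2.and (hev3.and (eventually_ge_atTop 1))))
  refine ⟨N, fun n hn => ?_⟩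
  obtain ⟨h1, h2, h3, hn1⟩ := hN n hn
  have hn0 : (0:ℝ) < n := by exact_mod_cast Nat.lt_of_lt_of_le Nat.zero_lt_one hn1
  have hn1R : (1:ℝ) ≤ n := by exact_mod_cast hn1
  have hlogn : 0 ≤ Real.log n := Real.log_nonneg hn1R
  set m : ℕ := ⌊a₄ * n⌋₊ with hmdef
  have hman : (m:ℝ) ≤ a₄ * n := by
    rw [hmdef]; exact Nat.floor_le (mul_nonneg ha₄0.le (Nat.cast_nonneg n))
  have hm_le_n : m ≤ n := by
    rw [hmdef]
    calc ⌊a₄ * n⌋₊ ≤ ⌊(n:ℝ)⌋₊ := by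
          apply Nat.floor_mono
          have := mul_le_mul_of_nonneg_right ha₄1 hn0.le
          linarith
      _ = n := Nat.floor_natCast n
  clear_value m
  set E : ℝ := Real.exp (-(δ/2) * n) with hEdef
  have hE0 : 0 < E := by rw [hEdef]; exact Real.exp_pos _
  set r : ℝ := A₃ * (n:ℝ)^(1-θ) with hrdef
  have hr0 : 0 ≤ r := by
    rw [hrdef]; exact mul_nonneg hA₃.le (Real.rpow_nonneg (Nat.cast_nonneg n) _)
  have hrhalf : r ≤ 1/2 := h1
  clear_value E r
  -- per-term bound
  have hterm : ∀ k ∈ Finset.Icc 1 m,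
      (n.choose k : ℝ) * A₃ ^ k *
        (a₁ + (1 - a₁) * Real.exp (-(Δ' * Real.log n / n) * k)) ^ n
      ≤ r * ((1:ℝ)/2)^(k-1) + E := by
    intro k hk
    obtain ⟨hk1, hkm⟩ := Finset.mem_Icc.1 hk
    have hkan : (k:ℝ) ≤ a₄ * n := le_trans (by exact_mod_cast Nat.cast_le.2 hkm) hman
    have hkn : k ≤ n := by
      have han : a₄ * n ≤ 1 * n := mul_le_mul_of_nonneg_right ha₄1 hn0.le
      have hh : (k:ℝ) ≤ (n:ℝ) := hkan.trans (by linarith)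
      exact_mod_cast hh
    obtain ⟨c, hcdef⟩ : ∃ c : ℝ, c = Δ' * Real.log n / n := ⟨_, rfl⟩
    have hc0 : 0 ≤ c := by
      rw [hcdef]; exact div_nonneg (mul_nonneg hΔ'pos.le hlogn) hn0.le
    have hcn : c * n = Δ' * Real.log n := by
      rw [hcdef]; field_simp
    have hrw : -(Δ' * Real.log n / n) * (k:ℝ) = -(c * k) := by
      rw [hcdef]; ring
    have hck0 : 0 ≤ c * k := mul_nonneg hc0 (Nat.cast_nonneg k)
    rw [hrw]
    set s : ℝ := a₁ + (1 - a₁) * Real.exp (-(c * k)) with hsdef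
    have hepos := Real.exp_pos (-(c * (k:ℝ)))
    have hs0 : 0 ≤ s := by
      rw [hsdef]; exact add_nonneg ha₁0.le (mul_nonneg hd1.le hepos.le)
    have hsle : s ≤ Real.exp (-((1-a₁)*(1 - Real.exp (-(c*k))))) := by
      have h := Real.add_one_le_exp (-((1-a₁)*(1 - Real.exp (-(c*(k:ℝ))))))
      have hexpand : -((1-a₁)*(1 - Real.exp (-(c*(k:ℝ))))) + 1
          = a₁ + (1-a₁)*Real.exp (-(c*(k:ℝ))) := by ring
      rw [hsdef]; linarith
    clear_value s
    have hsn : s ^ n ≤ Real.exp (-((1-a₁)*(1 - Real.exp (-(c*k)))) * n) := by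
      calc s ^ n ≤ (Real.exp (-((1-a₁)*(1 - Real.exp (-(c*k))))))^n :=
            pow_le_pow_left₀ hs0 hsle n
        _ = Real.exp (-((1-a₁)*(1 - Real.exp (-(c*k)))) * n) := by
            rw [← Real.exp_nat_mul]; ring_nf
    by_cases hck : c * k ≤ 1
    · -- small ck : geometric regime
      have hconv : Real.exp (-(c*k)) ≤ 1 - β * (c*k) := by
        have h := exp_neg_le_aux (c*k) hck0 hck
        rw [← hβdef] at h; exact h
      have hsn2 : s ^ n ≤ Real.exp (-(θ * Real.log n * k)) := by
        apply hsn.trans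
        apply Real.exp_le_exp.2
        have h5 : (1-a₁) * (n:ℝ) * (β*(c*k)) ≤ (1-a₁) * (n:ℝ) * (1 - Real.exp (-(c*k))) := by
          apply mul_le_mul_of_nonneg_left (by linarith) (mul_nonneg hd1.le hn0.le)
        have h6 : (1-a₁) * (n:ℝ) * (β*(c*k)) = θ * Real.log n * k := by
          rw [hθdef]
          calc (1-a₁) * (n:ℝ) * (β*(c*k)) = (1-a₁) * β * k * (c * n) := by ring
            _ = (1-a₁) * β * Δ' * Real.log n * k := by rw [hcn]; ring
        linarith [h5, h6]
      have hch : (n.choose k : ℝ) ≤ (n:ℝ)^k := by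
        exact_mod_cast Nat.choose_le_pow n k
      have hxp : Real.exp (-(θ * Real.log n * (k:ℝ))) = ((n:ℝ)^(-θ:ℝ))^k := by
        rw [Real.rpow_def_of_pos hn0, ← Real.exp_nat_mul]; ring_nf
      have hnn : (n:ℝ)^(1-θ:ℝ) = (n:ℝ) * (n:ℝ)^(-θ:ℝ) := by
        rw [show (1-θ:ℝ) = 1 + (-θ) by ring, Real.rpow_add hn0, Real.rpow_one]
      have hstep : (n.choose k : ℝ) * A₃ ^ k * s ^ n ≤ r ^ k := by
        calc (n.choose k : ℝ) * A₃ ^ k * s ^ n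
            ≤ (n:ℝ)^k * A₃ ^ k * Real.exp (-(θ * Real.log n * k)) := by
              apply mul_le_mul
                (mul_le_mul hch le_rfl (pow_nonneg hA₃.le k) (pow_nonneg (Nat.cast_nonneg n) k))
                hsn2 (pow_nonneg hs0 n)
                (mul_nonneg (pow_nonneg (Nat.cast_nonneg n) k) (pow_nonneg hA₃.le k))
          _ = r ^ k := by
              rw [hxp, hrdef, ← mul_pow, ← mul_pow]
              congr 1
              rw [hnn]; ring
      have hrk : r ^ k ≤ r * ((1:ℝ)/2)^(k-1) := by
        have he : r ^ k = r * r ^ (k-1) := by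
          conv_lhs => rw [show k = (k-1)+1 by omega]
          rw [pow_succ']
        rw [he]
        exact mul_le_mul_of_nonneg_left (pow_le_pow_left₀ hr0 hrhalf _) hr0
      calc (n.choose k : ℝ) * A₃ ^ k * s ^ n ≤ r * ((1:ℝ)/2)^(k-1) := hstep.trans hrk
        _ ≤ r * ((1:ℝ)/2)^(k-1) + E := le_add_of_nonneg_right hE0.le
    · -- large ck : exponential regime
      push_neg at hck
      have hβck : β ≤ 1 - Real.exp (-(c*k)) := by
        have h := Real.exp_le_exp.2 (by linarith : -(c*(k:ℝ)) ≤ -1)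
        rw [hβdef]; linarith
      have hsn2 : s ^ n ≤ Real.exp (-(δ * n)) := by
        apply hsn.trans
        apply Real.exp_le_exp.2
        have h5 : δ * n ≤ (1-a₁) * (1 - Real.exp (-(c*k))) * n := by
          rw [hδdef]
          apply mul_le_mul_of_nonneg_right (mul_le_mul_of_nonneg_left hβck hd1.le) hn0.le
        linarith
      have hmem : k ∈ Finset.range (n+1) := Finset.mem_range.2 (by omega)
      have hAx₀0 : 0 ≤ A₃ * x₀ := mul_nonneg hA₃.le hx₀pos.le
      have hbin : (n.choose k : ℝ) * (A₃*x₀)^k ≤ (1 + A₃*x₀)^n := by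
        have heq : (n.choose k:ℝ) * (A₃*x₀)^k = (A₃*x₀)^k * (1:ℝ)^(n-k) * (n.choose k) := by
          rw [one_pow]; ring
        rw [heq, show (1:ℝ)+A₃*x₀ = A₃*x₀+1 from by ring, add_pow]
        refine Finset.single_le_sum (f := fun j => (A₃*x₀)^j * (1:ℝ)^(n-j) * (n.choose j : ℝ)) (fun j _ => ?_) hmem
        exact mul_nonneg (mul_nonneg (pow_nonneg hAx₀0 j) (by norm_num)) (Nat.cast_nonneg _)
      have hP : (1+A₃*x₀)^n ≤ Real.exp ((δ/4)*n) := by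
        calc (1+A₃*x₀)^n ≤ (Real.exp (δ/4))^n := pow_le_pow_left₀ (by linarith) hAx₀ n
          _ = Real.exp ((δ/4)*n) := by rw [← Real.exp_nat_mul]; ring_nf
      have hx₀k : (0:ℝ) < x₀^k := pow_pos hx₀pos k
      have hinv : (1:ℝ)/x₀^k ≤ Real.exp ((δ/4)*n) := by
        have hx₀k_eq : x₀^k = Real.exp ((k:ℝ) * Real.log x₀) := by
          rw [Real.exp_nat_mul, Real.exp_log hx₀pos]
        rw [hx₀k_eq, one_div, ← Real.exp_neg]
        apply Real.exp_le_exp.2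
        have h8 : (k:ℝ) * (-Real.log x₀) ≤ (a₄*n) * (-Real.log x₀) :=
          mul_le_mul_of_nonneg_right hkan (by linarith)
        have h9 : (a₄*(-Real.log x₀))*n ≤ (δ/4)*n := mul_le_mul_of_nonneg_right ha₄L hn0.le
        linarith [h8, h9]
      have hCA : (n.choose k:ℝ) * A₃^k ≤ Real.exp ((δ/4)*n) * Real.exp ((δ/4)*n) := by
        calc (n.choose k:ℝ)*A₃^k = ((n.choose k:ℝ)*(A₃*x₀)^k) * (1/x₀^k) := by
              rw [mul_pow]; field_simp
          _ ≤ (1+A₃*x₀)^n * (1/x₀^k) :=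
              mul_le_mul_of_nonneg_right hbin (le_of_lt (by positivity))
          _ ≤ Real.exp ((δ/4)*n) * Real.exp ((δ/4)*n) := by
              apply mul_le_mul hP hinv (le_of_lt (by positivity)) (Real.exp_pos _).le
      calc (n.choose k : ℝ) * A₃ ^ k * s ^ n
          ≤ (Real.exp ((δ/4)*n) * Real.exp ((δ/4)*n)) * Real.exp (-(δ*n)) := by
            apply mul_le_mul hCA hsn2 (pow_nonneg hs0 n)
              (mul_nonneg (Real.exp_pos _).le (Real.exp_pos _).le)
        _ = E := by rw [hEdef, ← Real.exp_add, ← Real.exp_add]; congr 1; ring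
        _ ≤ r * ((1:ℝ)/2)^(k-1) + E :=
            le_add_of_nonneg_left (mul_nonneg hr0 (pow_nonneg (by norm_num) _))
  -- sum the bounds
  have hsum1 : ∑ k ∈ Finset.Icc 1 m, (n.choose k : ℝ) * A₃ ^ k *
        (a₁ + (1 - a₁) * Real.exp (-(Δ' * Real.log n / n) * k)) ^ n
      ≤ r * (∑ k ∈ Finset.Icc 1 m, ((1:ℝ)/2)^(k-1)) + m * E := by
    refine le_trans (Finset.sum_le_sum hterm) (le_of_eq ?_)
    rw [Finset.sum_add_distrib, Finset.sum_const, ← Finset.mul_sum, Nat.card_Icc]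
    simp [nsmul_eq_mul]
  have hsum2 : r * (∑ k ∈ Finset.Icc 1 m, ((1:ℝ)/2)^(k-1)) + (m:ℝ) * E ≤ 2*r + (n:ℝ)*E := by
    have g1 : r * (∑ k ∈ Finset.Icc 1 m, ((1:ℝ)/2)^(k-1)) ≤ r * 2 :=
      mul_le_mul_of_nonneg_left (geom_icc m) hr0
    have g2 : (m:ℝ) * E ≤ (n:ℝ) * E :=
      mul_le_mul_of_nonneg_right (by exact_mod_cast hm_le_n) hE0.le
    linarith
  have hfin1 : 2*r ≤ (n:ℝ)^(-ε:ℝ) := by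
    have hpos : 0 < (n:ℝ)^(θ-1-ε) := Real.rpow_pos_of_pos hn0 _
    have hA : 2*A₃ * (n:ℝ)^(-(θ-1-ε)) ≤ 1 := by
      rw [Real.rpow_neg hn0.le]
      have := (div_le_one hpos).2 h2
      rwa [div_eq_mul_inv] at this
    have hdec : (n:ℝ)^(1-θ:ℝ) = (n:ℝ)^(-(θ-1-ε)) * (n:ℝ)^(-ε:ℝ) := by
      rw [← Real.rpow_add hn0]; congr 1; ring
    calc 2*r = (2*A₃ * (n:ℝ)^(-(θ-1-ε))) * (n:ℝ)^(-ε:ℝ) := by rw [hrdef, hdec]; ring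
      _ ≤ 1 * (n:ℝ)^(-ε:ℝ) :=
          mul_le_mul_of_nonneg_right hA (Real.rpow_nonneg hn0.le _)
      _ = (n:ℝ)^(-ε:ℝ) := one_mul _
  have hfin2 : (n:ℝ)*E ≤ (n:ℝ)^(-ε:ℝ) := by
    have hn_eq : (n:ℝ) = (n:ℝ)^((1:ℝ)+ε) * (n:ℝ)^(-ε:ℝ) := by
      rw [← Real.rpow_add hn0, show (1:ℝ)+ε+(-ε) = 1 by ring, Real.rpow_one]
    calc (n:ℝ)*E = ((n:ℝ)^((1:ℝ)+ε) * E) * (n:ℝ)^(-ε:ℝ) := by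
          conv_lhs => rw [hn_eq]
          ring
      _ ≤ 1 * (n:ℝ)^(-ε:ℝ) :=
          mul_le_mul_of_nonneg_right h3 (Real.rpow_nonneg hn0.le _)
      _ = (n:ℝ)^(-ε:ℝ) := one_mul _
  have hrpow0 : 0 ≤ (n:ℝ)^(-ε:ℝ) := Real.rpow_nonneg hn0.le _
  calc ∑ k ∈ Finset.Icc 1 m, (n.choose k : ℝ) * A₃ ^ k *
        (a₁ + (1 - a₁) * Real.exp (-(Δ' * Real.log n / n) * k)) ^ n
      ≤ 2*r + (n:ℝ)*E := le_trans hsum1 hsum2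
    _ ≤ (n:ℝ)^(-ε:ℝ) + (n:ℝ)^(-ε:ℝ) := add_le_add hfin1 hfin2
    _ ≤ 3 * (n : ℝ) ^ (-ε:ℝ) := by linarith
end
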